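/- Let X be a nonempty poset in which every nonempty well-ordered subset has a least upper bound. Let F : X → 2^X be a correspondence such that: (1) for every nonempty well-ordered subset C of X, every x ∈ X with c < x for all c ∈ C, and every selection f : C → X of F (i.e., f(c) ∈ F(c) for all c ∈ C), there exists y ∈ F(x) with f(c) ≤ y for all c ∈ C; (2) the set A_F := {x ∈ X | ∃ y ∈ F(x), x ≤ y} is nonempty. Then F has a fixed point, i.e., there exists x ∈ X with x ∈ F(x). -/

import Mathlib

universe u

/-- Auxiliary Bourbaki–Witt-style contradiction: a set `A` closed under a strictly
inflationary map and under least upper bounds of its nonempty well-ordered subsets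
cannot be nonempty in a poset... (it can, so we derive `False`). -/
theorem abian_brown_aux {X : Type u} [PartialOrder X] (A : Set X) (g : X → X) (a : X)
    (ha : a ∈ A)
    (hglt : ∀ x ∈ A, x < g x)
    (hgA : ∀ x ∈ A, g x ∈ A)
    (hcl : ∀ C : Set X, C.Nonempty →
      (∀ T ⊆ C, T.Nonempty → ∃ m ∈ T, ∀ t ∈ T, m ≤ t) → C ⊆ A →
      ∃ s, IsLUB C s ∧ s ∈ A) : False := by
  classical
  set lub : Set X → X := fun C => if h : ∃ s, IsLUB C s ∧ s ∈ A then h.choose else a with hlub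
  set seq : Ordinal.{u} → X := fun α => Ordinal.limitRecOn α a (fun _ ih => g ih)
      (fun β _ ih => lub {x | ∃ γ, ∃ h : γ < β, ih γ h = x}) with hseq
  have seq0 : seq 0 = a := by simp [hseq]
  have seqsucc : ∀ γ, seq (Order.succ γ) = g (seq γ) := by
    intro γ; simp [hseq]
  have seqlim : ∀ α : Ordinal.{u}, Order.IsSuccLimit α → seq α = lub (seq '' Set.Iio α) := by
    intro α hα
    have : seq α = lub {x | ∃ γ, ∃ _ : γ < α, seq γ = x} := by
      simp only [hseq]
      rw [Ordinal.limitRecOn_limit _ _ _ _ hα]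
    rw [this]
    congr 1
    ext x
    simp [Set.mem_image, Set.mem_Iio]
  have main : ∀ α : Ordinal.{u}, seq α ∈ A ∧ ∀ β < α, seq β < seq α := by
    intro α
    induction α using Ordinal.induction with
    | h α IH =>
      rcases Ordinal.zero_or_succ_or_isSuccLimit α with h0 | ⟨γ, rfl⟩ | hlim
      · subst h0
        exact ⟨seq0 ▸ ha, fun β hβ => absurd hβ (fun h : β < 0 => not_lt_zero h)⟩
      · have hγ : γ < Order.succ γ := Order.lt_succ γ
        have hAγ := (IH γ hγ).1
        have hlt : seq γ < seq (Order.succ γ) := by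
          rw [seqsucc]; exact hglt _ hAγ
        refine ⟨(seqsucc γ) ▸ hgA _ hAγ, fun β hβ => ?_⟩
        rcases lt_or_eq_of_le (Order.lt_succ_iff.mp hβ) with h | h
        · exact ((IH γ hγ).2 β h).trans hlt
        · exact h ▸ hlt
      · -- limit case
        set C : Set X := seq '' Set.Iio α with hC
        have hmono : ∀ β γ : Ordinal.{u}, β < γ → γ < α → seq β < seq γ := fun β γ h hγ =>
          (IH γ hγ).2 β h
        have hCne : C.Nonempty := ⟨seq 0, 0, hlim.pos, rfl⟩
        have hCw : ∀ T ⊆ C, T.Nonempty → ∃ m ∈ T, ∀ t ∈ T, m ≤ t := by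
          intro T hT ⟨t, ht⟩
          set S : Set Ordinal.{u} := {β | β < α ∧ seq β ∈ T} with hS
          have hSne : S.Nonempty := by
            obtain ⟨β, hβ, hβt⟩ := hT ht
            exact ⟨β, hβ, hβt ▸ ht⟩
          obtain ⟨β₀, hβ₀, hβ₀min⟩ := (Ordinal.lt_wf.has_min S hSne)
          refine ⟨seq β₀, hβ₀.2, fun s hs => ?_⟩
          obtain ⟨γ, hγ, hγs⟩ := hT hs
          have hγS : γ ∈ S := ⟨hγ, hγs ▸ hs⟩
          have hle : β₀ ≤ γ := not_lt.mp (hβ₀min γ hγS)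
          rcases lt_or_eq_of_le hle with h | h
          · exact hγs ▸ (hmono β₀ γ h hγ).le
          · exact hγs ▸ h ▸ le_refl _
        have hCA : C ⊆ A := by
          rintro x ⟨β, hβ, rfl⟩
          exact (IH β hβ).1
        obtain ⟨s, hsl, hsA⟩ := hcl C hCne hCw hCA
        have hseqα : seq α = s := by
          rw [seqlim α hlim, hlub]
          have hex : ∃ s, IsLUB C s ∧ s ∈ A := ⟨s, hsl, hsA⟩
          simp only [dif_pos hex]
          exact (dif_pos hex).trans (hex.choose_spec.1.unique hsl)
        refine ⟨hseqα ▸ hsA, fun β hβ => ?_⟩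
        have hsucc : Order.succ β < α := hlim.succ_lt hβ
        have h1' : seq β < seq (Order.succ β) := hmono β (Order.succ β) (Order.lt_succ β) hsucc
        have h2' : seq (Order.succ β) ≤ s := hsl.1 ⟨Order.succ β, hsucc, rfl⟩
        exact hseqα ▸ lt_of_lt_of_le h1' h2'
  have hsm : StrictMono seq := fun β α h => (main α).2 β h
  exact not_small_ordinal.{u} (small_of_injective hsm.injective)

/-- A subset `C` of a poset is well-ordered (in the induced order) if every nonempty
subset of `C` has a least element. -/
def IsWellOrderedSubset {X : Type*} [PartialOrder X] (C : Set X) : Prop :=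
  ∀ T ⊆ C, T.Nonempty → ∃ m ∈ T, ∀ t ∈ T, m ≤ t

/-- Theorem 6.1 (multivalued Abian-Brown): let `X` be a nonempty poset in which every
nonempty well-ordered subset has a least upper bound. If `F` dominates selections on
well-ordered subsets from above (condition (1)) and `A_F ≠ ∅`, then `F` has a fixed
point. -/
theorem multivalued_abian_brown
    {X : Type*} [PartialOrder X] [Nonempty X] (F : X → Set X)
    (hwlub : ∀ C : Set X, C.Nonempty → IsWellOrderedSubset C → ∃ s, IsLUB C s)
    (h1 : ∀ C : Set X, C.Nonempty → IsWellOrderedSubset C →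
      ∀ x : X, (∀ c ∈ C, c < x) →
      ∀ f : X → X, (∀ c ∈ C, f c ∈ F c) →
      ∃ y ∈ F x, ∀ c ∈ C, f c ≤ y)
    (h2 : {x : X | ∃ y ∈ F x, x ≤ y}.Nonempty) :
    ∃ x : X, x ∈ F x := by
  classical
  by_contra hfix
  push_neg at hfix
  obtain ⟨a, ha⟩ := h2
  set A : Set X := {x | ∃ y ∈ F x, x ≤ y} with hA
  set g : X → X := fun x => if hx : ∃ y ∈ F x, x ≤ y then hx.choose else x with hg
  have hgF : ∀ x ∈ A, g x ∈ F x := by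
    intro x hx
    have hx' : ∃ y ∈ F x, x ≤ y := hx
    rw [hg]
    simp only [dif_pos hx']
    exact hx'.choose_spec.1
  have hgle : ∀ x ∈ A, x ≤ g x := by
    intro x hx
    have hx' : ∃ y ∈ F x, x ≤ y := hx
    rw [hg]
    simp only [dif_pos hx']
    exact hx'.choose_spec.2
  have hglt : ∀ x ∈ A, x < g x := by
    intro x hx
    refine lt_of_le_of_ne (hgle x hx) fun h => ?_
    have := hgF x hx
    rw [← h] at this
    exact hfix x this
  -- singletons are well-ordered
  have hsing : ∀ x : X, IsWellOrderedSubset ({x} : Set X) := by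
    intro x T hT ⟨t, ht⟩
    have h1 : t = x := hT ht
    exact ⟨t, ht, fun s hs => le_of_eq (h1.trans (hT hs).symm)⟩
  have hgA : ∀ x ∈ A, g x ∈ A := by
    intro x hx
    obtain ⟨y, hyF, hy⟩ := h1 {x} ⟨x, rfl⟩ (hsing x) (g x)
      (fun c hc => hc ▸ hglt x hx) g (fun c hc => hc ▸ hgF x hx)
    exact ⟨y, hyF, hy x rfl⟩
  -- A is closed under lubs of well-ordered chains
  have hclA : ∀ C : Set X, C.Nonempty → IsWellOrderedSubset C → C ⊆ A →
      ∀ s, IsLUB C s → s ∈ A := by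
    intro C hCne hCw hCA s hs
    by_cases hsC : s ∈ C
    · exact hCA hsC
    · have hlt : ∀ c ∈ C, c < s := fun c hc =>
        lt_of_le_of_ne (hs.1 hc) (fun h => hsC (h ▸ hc))
      obtain ⟨y, hyF, hy⟩ := h1 C hCne hCw s hlt g (fun c hc => hgF c (hCA hc))
      refine ⟨y, hyF, hs.2 fun c hc => ?_⟩
      exact (hgle c (hCA hc)).trans (hy c hc)
  refine abian_brown_aux A g a ha hglt hgA ?_
  intro C hCne hCw hCA
  obtain ⟨s, hs⟩ := hwlub C hCne hCw
  exact ⟨s, hs, hclA C hCne hCw hCA s hs⟩
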